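/- arXiv:1602.04799 — 2 statements merged into one kernel-verified Lean document; each statement's English description precedes it below -/
import Mathlib

section
/- Novikoff's theorem: let φ₁,…,φ_N ∈ ℝ^D be unit vectors with labels y₁,…,y_N ∈ {−1, +1}, and suppose there exists a unit vector u and γ > 0 with y_i·⟨u, φ_i⟩ ≥ γ for all i. Then any sequence of perceptron updates w ← w + y·φ (starting from w = 0, each update performed only on a misclassified example, i.e., y·⟨w, φ⟩ ≤ 0) has length at most 1/γ². -/
open scoped RealInnerProductSpace

theorem novikoff_mistake_bound (D N T : ℕ)
    (φ : Fin N → EuclideanSpace ℝ (Fin D)) (y : Fin N → ℝ)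
    (u : EuclideanSpace ℝ (Fin D)) (γ : ℝ) (hγ : 0 < γ)
    (hφ : ∀ i, ‖φ i‖ = 1) (hy : ∀ i, y i = 1 ∨ y i = -1) (hu : ‖u‖ = 1)
    (hmargin : ∀ i, y i * (inner ℝ (u) (φ i) : ℝ) ≥ γ)
    (w : ℕ → EuclideanSpace ℝ (Fin D)) (idx : ℕ → Fin N)
    (hw0 : w 0 = 0)
    (hmis : ∀ t < T, y (idx t) * (inner ℝ (w t) (φ (idx t)) : ℝ) ≤ 0)
    (hupd : ∀ t < T, w (t + 1) = w t + y (idx t) • φ (idx t)) :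
    (T : ℝ) ≤ 1 / γ ^ 2 := by
  have hy2 : ∀ i, (y i) ^ 2 = 1 := by
    intro i; rcases hy i with h | h <;> rw [h] <;> norm_num
  have key : ∀ t ≤ T, (t : ℝ) * γ ≤ inner ℝ u (w t) ∧ ‖w t‖ ^ 2 ≤ (t : ℝ) := by
    intro t ht
    induction t with
    | zero => simp [hw0]
    | succ n ih =>
      obtain ⟨h1, h2⟩ := ih (le_of_lt ht)
      have hn : n < T := ht
      have hup := hupd n hn
      constructor
      · rw [hup, inner_add_right, inner_smul_right]
        push_cast
        have := hmargin (idx n)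
        rw [mul_comm ((n:ℝ)+1) γ]
        nlinarith [this, h1]
      · have : ‖w (n+1)‖ ^ 2 = ‖w n‖ ^ 2 + 2 * (y (idx n) * inner ℝ (w n) (φ (idx n))) + (y (idx n))^2 * ‖φ (idx n)‖^2 := by
          rw [hup, ← real_inner_self_eq_norm_sq, inner_add_add_self, inner_smul_left,
            inner_smul_right, inner_smul_left, inner_smul_right,
            real_inner_self_eq_norm_sq, real_inner_self_eq_norm_sq]
          simp only [RingHom.id_apply, starRingEnd_apply, star_trivial]
          rw [real_inner_comm (φ (idx n)) (w n)]
          ring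
        rw [this, hy2, hφ]
        push_cast
        have := hmis n hn
        nlinarith [this, h2]
  obtain ⟨h1, h2⟩ := key T le_rfl
  have hc : inner ℝ u (w T) ≤ ‖w T‖ := by
    calc (inner ℝ u (w T) : ℝ) ≤ ‖u‖ * ‖w T‖ := real_inner_le_norm _ _
    _ = ‖w T‖ := by rw [hu, one_mul]
  have hT2 : ((T:ℝ) * γ)^2 ≤ (T : ℝ) := by
    nlinarith [norm_nonneg (w T), h1, h2, hc, mul_nonneg (Nat.cast_nonneg (α := ℝ) T) hγ.le]
  rw [le_div_iff₀ (pow_pos hγ 2)]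
  nlinarith [hT2]
end

section
/- In Novikoff's setting, after t perceptron updates starting from w₀ = 0, the weight vector w_t satisfies ⟨u, w_t⟩ ≥ t·γ and ‖w_t‖² ≤ t, hence t·γ ≤ ⟨u, w_t⟩ ≤ ‖w_t‖ ≤ √t and therefore t ≤ 1/γ². -/
open scoped RealInnerProductSpace

theorem novikoff_invariants (D N T : ℕ)
    (φ : Fin N → EuclideanSpace ℝ (Fin D)) (y : Fin N → ℝ)
    (u : EuclideanSpace ℝ (Fin D)) (γ : ℝ) (hγ : 0 < γ)
    (hφ : ∀ i, ‖φ i‖ = 1) (hy : ∀ i, y i = 1 ∨ y i = -1) (hu : ‖u‖ = 1)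
    (hmargin : ∀ i, y i * (inner ℝ (u) (φ i) : ℝ) ≥ γ)
    (w : ℕ → EuclideanSpace ℝ (Fin D)) (idx : ℕ → Fin N)
    (hw0 : w 0 = 0)
    (hmis : ∀ t < T, y (idx t) * (inner ℝ (w t) (φ (idx t)) : ℝ) ≤ 0)
    (hupd : ∀ t < T, w (t + 1) = w t + y (idx t) • φ (idx t)) :
    (T : ℝ) * γ ≤ (inner ℝ (u) (w T) : ℝ) ∧ ‖w T‖ ^ 2 ≤ (T : ℝ) ∧
      (inner ℝ (u) (w T) : ℝ) ≤ ‖w T‖ ∧ ‖w T‖ ≤ Real.sqrt T ∧ (T : ℝ) ≤ 1 / γ ^ 2 := by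
  have key : ∀ t ≤ T, (t : ℝ) * γ ≤ (inner ℝ u (w t) : ℝ) ∧ ‖w t‖ ^ 2 ≤ (t : ℝ) := by
    intro t ht
    induction t with
    | zero => simp [hw0]
    | succ n ih =>
      have hn : n < T := Nat.lt_of_succ_le ht
      obtain ⟨ih1, ih2⟩ := ih (le_of_lt hn)
      have hupd' := hupd n hn
      have hy2 : (y (idx n))^2 = 1 := by rcases hy (idx n) with h | h <;> simp [h]
      constructor
      · have : (inner ℝ u (w (n+1)) : ℝ) = inner ℝ u (w n) + y (idx n) * inner ℝ u (φ (idx n)) := by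
          rw [hupd', inner_add_right, real_inner_smul_right]
        rw [this]
        push_cast
        have := hmargin (idx n)
        nlinarith
      · have hexp : ‖w (n+1)‖^2 = ‖w n‖^2 + 2 * (y (idx n) * inner ℝ (w n) (φ (idx n))) + (y (idx n))^2 * ‖φ (idx n)‖^2 := by
          rw [hupd', norm_add_sq_real, real_inner_smul_right, norm_smul, mul_pow, Real.norm_eq_abs, sq_abs]
        rw [hexp, hy2, hφ]
        have := hmis n hn
        push_cast
        nlinarith
  obtain ⟨h1, h2⟩ := key T le_rfl
  have hcs : (inner ℝ u (w T) : ℝ) ≤ ‖w T‖ := by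
    calc (inner ℝ u (w T) : ℝ) ≤ ‖u‖ * ‖w T‖ := real_inner_le_norm u (w T)
    _ = ‖w T‖ := by rw [hu, one_mul]
  have hsq : ‖w T‖ ≤ Real.sqrt T := by
    have := Real.sqrt_le_sqrt h2
    rwa [Real.sqrt_sq (norm_nonneg _)] at this
  refine ⟨h1, h2, hcs, hsq, ?_⟩
  have hTγ : (T:ℝ) * γ ≤ Real.sqrt T := le_trans h1 (le_trans hcs hsq)
  have hs : Real.sqrt T ^ 2 = T := Real.sq_sqrt (Nat.cast_nonneg T)
  have hs0 : 0 ≤ Real.sqrt T := Real.sqrt_nonneg _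
  have hT0 : (0:ℝ) ≤ T := Nat.cast_nonneg T
  rw [le_div_iff₀ (by positivity)]
  rcases eq_or_lt_of_le hT0 with h0 | h0
  · rw [← h0]; nlinarith
  · have hTg0 : 0 ≤ (T:ℝ) * γ := by positivity
    have := mul_le_mul hTγ hTγ hTg0 hs0
    nlinarith
end
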